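/- If in a forest no two α-nodes are incomparable and there exists at least one α-node, then there exists an α-node x with no α-node strictly below it, and every α-node of the forest is an ancestor of x, a sibling of x, or equal to x. -/
import Mathlib


/-- Unranked ordered trees over an alphabet `E`. -/
inductive PTree (E : Type) : Type
  | node : E → List (PTree E) → PTree E

/-- Forests over `E`. -/
abbrev PForest (E : Type) := List (PTree E)

def PTree.label {E : Type} : PTree E → E
  | .node a _ => a

def PTree.children {E : Type} : PTree E → List (PTree E)
  | .node _ c => c

/-- The subtree of a forest at a position (a nonempty sequence of child indices),
if it exists. -/
def PForest.get? {E : Type} : List ℕ → PForest E → Option (PTree E)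
  | [], _ => none
  | [i], f => f[i]?
  | i :: p, f => (f[i]?).bind fun t => PForest.get? p t.children

/-- `p` is (the position of) a node of the forest `f`. -/
def IsNode {E : Type} (f : PForest E) (p : List ℕ) : Prop :=
  (PForest.get? p f).isSome

/-- `y` is the sibling immediately next to `x`. -/
def NS {E : Type} (f : PForest E) (p q : List ℕ) : Prop :=
  IsNode f p ∧ IsNode f q ∧ ∃ u i, p = u ++ [i] ∧ q = u ++ [i + 1]

/-- `x` is the parent of `y`. -/
def PC {E : Type} (f : PForest E) (p q : List ℕ) : Prop :=
  IsNode f p ∧ IsNode f q ∧ ∃ i, q = p ++ [i]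

/-- `y` is a sibling of `x`, two or more next-sibling steps to the right. -/
def SFS {E : Type} (f : PForest E) (p q : List ℕ) : Prop :=
  IsNode f p ∧ IsNode f q ∧ ∃ u i j, p = u ++ [i] ∧ q = u ++ [j] ∧ i + 2 ≤ j

/-- `y` is a descendant of `x`, two or more parent-child steps below. -/
def SAD {E : Type} (f : PForest E) (p q : List ℕ) : Prop :=
  IsNode f p ∧ IsNode f q ∧ ∃ r, q = p ++ r ∧ 2 ≤ r.length

/-- `x` and `y` are incomparable: none of the ten basic relations (other than
incomparability itself) holds. -/
def Incomp {E : Type} (f : PForest E) (p q : List ℕ) : Prop :=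
  IsNode f p ∧ IsNode f q ∧
    ¬(p = q ∨ NS f p q ∨ NS f q p ∨ PC f p q ∨ PC f q p ∨
      SFS f p q ∨ SFS f q p ∨ SAD f p q ∨ SAD f q p)

/-- `w` and `z` are (distinct) siblings: children of the same parent (or two
roots of the forest), at any horizontal distance. -/
def Sib {E : Type} (f : PForest E) (p q : List ℕ) : Prop :=
  IsNode f p ∧ IsNode f q ∧ p ≠ q ∧ ∃ u i j, p = u ++ [i] ∧ q = u ++ [j]

/-- `p` is a node of `f` whose label satisfies `α`. -/
def AlphaNode {E : Type} (f : PForest E) (α : E → Prop) (p : List ℕ) : Prop :=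
  ∃ t, PForest.get? p f = some t ∧ α t.label


mutual
/-- Height of a tree. -/
def PTree.ht {E : Type} : PTree E → ℕ
  | .node _ c => 1 + htF c
/-- Height of a forest. -/
def htF {E : Type} : List (PTree E) → ℕ
  | [] => 0
  | t :: f => max t.ht (htF f)
end

lemma PTree.ht_eq {E : Type} (t : PTree E) : t.ht = 1 + htF t.children := by
  cases t; rfl

lemma ht_le_of_mem {E : Type} {t : PTree E} : ∀ {f : List (PTree E)}, t ∈ f → t.ht ≤ htF f := by
  intro f h
  induction f with
  | nil => simp at h
  | cons s f ih =>
    rcases List.mem_cons.mp h with rfl | h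
    · exact le_max_left _ _
    · exact le_trans (ih h) (le_max_right _ _)

lemma mem_of_getElem? {E : Type} {f : List (PTree E)} {i : ℕ} {t : PTree E}
    (h : f[i]? = some t) : t ∈ f := by
  obtain ⟨hn, rfl⟩ := List.getElem?_eq_some_iff.mp h
  exact List.getElem_mem hn

lemma length_le_htF {E : Type} (p : List ℕ) :
    ∀ (f : PForest E), IsNode f p → p.length ≤ htF f := by
  induction p with
  | nil => intro f h; simp [IsNode, PForest.get?] at h
  | cons i p ih =>
    intro f h
    cases p with
    | nil =>
      have h' : (f[i]?).isSome := h
      obtain ⟨t, ht⟩ := Option.isSome_iff_exists.mp h'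
      have h1 : t.ht ≤ htF f := ht_le_of_mem (mem_of_getElem? ht)
      have h2 : 1 ≤ t.ht := by rw [t.ht_eq]; omega
      simpa using le_trans h2 h1
    | cons j q =>
      have h' : ((f[i]?).bind fun t => PForest.get? (j :: q) t.children).isSome := h
      cases hf : f[i]? with
      | none => rw [hf] at h'; simp at h'
      | some t =>
        rw [hf] at h'
        simp only [Option.bind_some] at h'
        have hih := ih t.children h'
        have h1 : t.ht ≤ htF f := ht_le_of_mem (mem_of_getElem? hf)
        have h2 := t.ht_eq
        simp only [List.length_cons] at hih ⊢
        omega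

lemma AlphaNode.isNode {E : Type} {f : PForest E} {α : E → Prop} {p : List ℕ}
    (h : AlphaNode f α p) : IsNode f p := by
  obtain ⟨t, ht, _⟩ := h
  simp [IsNode, ht]

/-- If no two α-nodes of a forest are incomparable and some α-node exists, then
there is an α-node `x` with no α-node strictly below it, such that every
α-node is a (proper) ancestor of `x`, a sibling of `x`, or equal to `x`. -/
theorem exists_lowest_alpha_node {E : Type} (f : PForest E) (α : E → Prop)
    (hpair : ∀ p q : List ℕ, AlphaNode f α p → AlphaNode f α q → ¬ Incomp f p q)
    (hex : ∃ p : List ℕ, AlphaNode f α p) :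
    ∃ x : List ℕ, AlphaNode f α x ∧
      (∀ w : List ℕ, AlphaNode f α w → ¬ (x <+: w ∧ x ≠ w)) ∧
      (∀ w : List ℕ, AlphaNode f α w → (w <+: x ∧ w ≠ x) ∨ Sib f w x ∨ w = x) := by
  classical
  have key : ∃ x : List ℕ, AlphaNode f α x ∧ ∀ w, AlphaNode f α w → w.length ≤ x.length := by
    set S : Set ℕ := {n | ∃ p, AlphaNode f α p ∧ p.length = n} with hS
    obtain ⟨p0, hp0⟩ := hex
    have hne : S.Nonempty := ⟨p0.length, p0, hp0, rfl⟩
    have hbdd : BddAbove S := by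
      refine ⟨htF f, ?_⟩
      rintro n ⟨p, hp, rfl⟩
      exact length_le_htF p f hp.isNode
    obtain ⟨x, hx, hxl⟩ := Nat.sSup_mem hne hbdd
    exact ⟨x, hx, fun w hw => hxl ▸ le_csSup hbdd ⟨w, hw, rfl⟩⟩
  obtain ⟨x, hx, hmax⟩ := key
  have hxn := hx.isNode
  refine ⟨x, hx, ?_, ?_⟩
  · rintro w hw ⟨hpre, hne'⟩
    exact hne' (List.IsPrefix.eq_of_length hpre
      (le_antisymm (List.IsPrefix.length_le hpre) (hmax w hw)))
  · intro w hw
    have hwn := hw.isNode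
    have h := hpair w x hw hx
    have hor : (w = x ∨ NS f w x ∨ NS f x w ∨ PC f w x ∨ PC f x w ∨
        SFS f w x ∨ SFS f x w ∨ SAD f w x ∨ SAD f x w) := by
      by_contra hc
      exact h ⟨hwn, hxn, hc⟩
    rcases hor with rfl | ⟨_, _, u, i, hw', hx'⟩ | ⟨_, _, u, i, hx', hw'⟩ |
        ⟨_, _, i, hx'⟩ | ⟨_, _, i, hw'⟩ | ⟨_, _, u, i, j, hw', hx', hij⟩ |
        ⟨_, _, u, i, j, hx', hw', hij⟩ | ⟨_, _, r, hx', hr⟩ | ⟨_, _, r, hw', hr⟩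
    · exact Or.inr (Or.inr rfl)
    · refine Or.inr (Or.inl ⟨hwn, hxn, ?_, u, i, i + 1, hw', hx'⟩)
      intro he; rw [hw', hx'] at he; simp at he
    · refine Or.inr (Or.inl ⟨hwn, hxn, ?_, u, i + 1, i, hw', hx'⟩)
      intro he; rw [hw', hx'] at he; simp at he
    · refine Or.inl ⟨⟨[i], hx'.symm⟩, ?_⟩
      intro he; rw [← he] at hx'; simp at hx'
    · exfalso
      have := hmax w hw
      rw [hw'] at this
      simp at this
    · refine Or.inr (Or.inl ⟨hwn, hxn, ?_, u, i, j, hw', hx'⟩)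
      intro he; rw [hw', hx'] at he; simp at he; omega
    · refine Or.inr (Or.inl ⟨hwn, hxn, ?_, u, j, i, hw', hx'⟩)
      intro he; rw [hw', hx'] at he; simp at he; omega
    · refine Or.inl ⟨⟨r, hx'.symm⟩, ?_⟩
      intro he; rw [← he] at hx'
      have : r = [] := by simpa using hx'.symm
      rw [this] at hr; simp at hr
    · exfalso
      have := hmax w hw
      rw [hw', List.length_append] at this
      omega
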